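/- Suppose a nonnegative sequence (e_p)_{p≥1} satisfies: e_1 ≤ C·b_0^{-1}·Δt², and for each p ≥ 1, e_{p+1} ≤ (1-b_1)e_p + Σ_{j=1}^{p-1}(b_j - b_{j+1})e_{p-j} + C·Δt², where b_j = (j+1)^{1-γ} - j^{1-γ}, 0 < γ < 1, C ≥ 0, Δt > 0. Then e_p ≤ C·b_{p-1}^{-1}·Δt² for all p ≥ 1. -/

import Mathlib

theorem error_recursion_bound (γ : ℝ) (hγ0 : 0 < γ) (hγ1 : γ < 1)
    (C Δt : ℝ) (hC : 0 ≤ C) (hΔt : 0 < Δt)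
    (b : ℕ → ℝ) (hb : ∀ j : ℕ, b j = ((j : ℝ) + 1) ^ (1 - γ) - (j : ℝ) ^ (1 - γ))
    (e : ℕ → ℝ) (he : ∀ p : ℕ, 1 ≤ p → 0 ≤ e p)
    (h1 : e 1 ≤ C * (b 0)⁻¹ * Δt ^ 2)
    (hrec : ∀ p : ℕ, 1 ≤ p →
      e (p + 1) ≤ (1 - b 1) * e p
        + (∑ j ∈ Finset.Icc 1 (p - 1), (b j - b (j + 1)) * e (p - j))
        + C * Δt ^ 2) :
    ∀ p : ℕ, 1 ≤ p → e p ≤ C * (b (p - 1))⁻¹ * Δt ^ 2 := by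
  have hs0 : 0 < 1 - γ := by linarith
  have hs1 : 1 - γ < 1 := by linarith
  have hbpos : ∀ j : ℕ, 0 < b j := by
    intro j
    rw [hb j]
    have : (j : ℝ) ^ (1 - γ) < ((j : ℝ) + 1) ^ (1 - γ) :=
      Real.rpow_lt_rpow (Nat.cast_nonneg j) (by linarith) hs0
    linarith
  have hbdec : ∀ j : ℕ, b (j + 1) ≤ b j := by
    intro j
    have hcc := (Real.strictConcaveOn_rpow hs0 hs1).concaveOn
    have h := hcc.2 (Set.mem_Ici.mpr (Nat.cast_nonneg j))
      (Set.mem_Ici.mpr (by positivity : (0:ℝ) ≤ (j:ℝ) + 2))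
      (by norm_num : (0:ℝ) ≤ 1/2) (by norm_num : (0:ℝ) ≤ 1/2) (by norm_num)
    simp only [smul_eq_mul] at h
    have hmid : (1/2 : ℝ) * (j:ℝ) + (1/2) * ((j:ℝ) + 2) = (j:ℝ) + 1 := by ring
    rw [hmid] at h
    rw [hb j, hb (j+1)]
    push_cast
    rw [show ((j:ℝ) + 1 + 1) = (j:ℝ) + 2 from by ring]
    linarith
  have hbanti : ∀ m n : ℕ, m ≤ n → b n ≤ b m := by
    intro m n hmn
    exact antitone_nat_of_succ_le hbdec hmn
  have hb0 : b 0 = 1 := by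
    rw [hb 0]
    simp [Real.zero_rpow (ne_of_gt hs0), Real.one_rpow]
  have hble1 : ∀ j : ℕ, b j ≤ 1 := fun j => hb0 ▸ hbanti 0 j (Nat.zero_le j)
  -- strong induction
  suffices H : ∀ p : ℕ, ∀ q : ℕ, 1 ≤ q → q ≤ p → e q ≤ C * (b (q - 1))⁻¹ * Δt ^ 2 by
    exact fun p hp => H p p hp le_rfl
  intro p
  induction p with
  | zero => intro q hq hqp; omega
  | succ p ih =>
    intro q hq hqp
    rcases Nat.lt_or_ge q (p + 1) with hlt | hge
    · exact ih q hq (by omega)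
    have hqe : q = p + 1 := by omega
    subst hqe
    rcases Nat.eq_zero_or_pos p with hp0 | hp1
    · subst hp0
      simpa using h1
    -- p ≥ 1
    have hK : 0 ≤ C * (b (p - 1))⁻¹ * Δt ^ 2 := by
      have := (hbpos (p-1)).le
      positivity
    set K := C * (b (p - 1))⁻¹ * Δt ^ 2 with hKdef
    have hep : e p ≤ K := ih p hp1 le_rfl
    have hsum : ∑ j ∈ Finset.Icc 1 (p - 1), (b j - b (j + 1)) * e (p - j)
        ≤ ∑ j ∈ Finset.Icc 1 (p - 1), (b j - b (j + 1)) * K := by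
      apply Finset.sum_le_sum
      intro j hj
      simp only [Finset.mem_Icc] at hj
      have h1j : 1 ≤ j := hj.1
      have hjp : j ≤ p - 1 := hj.2
      have hpj1 : 1 ≤ p - j := by omega
      have hbnd : e (p - j) ≤ C * (b (p - j - 1))⁻¹ * Δt ^ 2 :=
        ih (p - j) hpj1 (by omega)
      have hmono : (b (p - j - 1))⁻¹ ≤ (b (p - 1))⁻¹ := by
        apply inv_anti₀ (hbpos (p-1))
        exact hbanti (p - j - 1) (p - 1) (by omega)
      have : e (p - j) ≤ K := by
        calc e (p - j) ≤ C * (b (p - j - 1))⁻¹ * Δt ^ 2 := hbnd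
          _ ≤ K := by
              rw [hKdef]
              have h2 : (0:ℝ) ≤ Δt ^ 2 := by positivity
              have := mul_le_mul_of_nonneg_right (mul_le_mul_of_nonneg_left hmono hC) h2
              linarith
      have hcoef : 0 ≤ b j - b (j + 1) := by linarith [hbdec j]
      exact mul_le_mul_of_nonneg_left this hcoef
    have htel : ∑ j ∈ Finset.Icc 1 (p - 1), (b j - b (j + 1)) = b 1 - b p := by
      have hIcc : Finset.Icc 1 (p - 1) = Finset.Ico 1 p := by
        ext x; simp [Finset.mem_Icc, Finset.mem_Ico]; omega
      rw [hIcc, Finset.sum_Ico_eq_sum_range]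
      calc ∑ i ∈ Finset.range (p - 1), (b (1 + i) - b (1 + i + 1))
          = ∑ i ∈ Finset.range (p - 1), ((fun i => b (1 + i)) i - (fun i => b (1 + i)) (i + 1)) := by
            apply Finset.sum_congr rfl
            intro i _; simp only []; congr 2
        _ = (fun i => b (1 + i)) 0 - (fun i => b (1 + i)) (p - 1) := Finset.sum_range_sub' _ _
        _ = b 1 - b p := by simp only []; congr 2 <;> omega
    have hstep := hrec p hp1
    have hmain : e (p + 1) ≤ (1 - b p) * K + C * Δt ^ 2 := by
      calc e (p + 1) ≤ (1 - b 1) * e p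
            + (∑ j ∈ Finset.Icc 1 (p - 1), (b j - b (j + 1)) * e (p - j)) + C * Δt ^ 2 := hstep
        _ ≤ (1 - b 1) * K + (∑ j ∈ Finset.Icc 1 (p - 1), (b j - b (j + 1)) * K) + C * Δt ^ 2 := by
            have hcoef1 : 0 ≤ 1 - b 1 := by linarith [hble1 1]
            have := mul_le_mul_of_nonneg_left hep hcoef1
            linarith [hsum]
        _ = (1 - b 1) * K + (b 1 - b p) * K + C * Δt ^ 2 := by
            rw [← Finset.sum_mul, htel]
        _ = (1 - b p) * K + C * Δt ^ 2 := by ring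
    -- final inequality
    have hgoal : (1 - b p) * K + C * Δt ^ 2 ≤ C * (b p)⁻¹ * Δt ^ 2 := by
      rw [hKdef]
      have hbp := hbpos p
      have hbp1 := hbpos (p - 1)
      have hdec : b p ≤ b (p - 1) := hbanti (p - 1) p (by omega)
      have hle1 : b p ≤ 1 := hble1 p
      have key : (1 - b p) * (b (p - 1))⁻¹ + 1 ≤ (b p)⁻¹ := by
        rw [inv_eq_one_div, inv_eq_one_div,
          show (1 - b p) * (1 / b (p - 1)) + 1 = (1 - b p + b (p - 1)) / b (p - 1) by
            field_simp,
          div_le_div_iff₀ hbp1 hbp]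
        nlinarith [mul_nonneg (sub_nonneg.mpr hdec) (sub_nonneg.mpr hle1)]
      have h2 : (0:ℝ) ≤ C * Δt ^ 2 := by positivity
      calc (1 - b p) * (C * (b (p - 1))⁻¹ * Δt ^ 2) + C * Δt ^ 2
          = ((1 - b p) * (b (p - 1))⁻¹ + 1) * (C * Δt ^ 2) := by ring
        _ ≤ (b p)⁻¹ * (C * Δt ^ 2) := mul_le_mul_of_nonneg_right key h2
        _ = C * (b p)⁻¹ * Δt ^ 2 := by ring
    have : (p + 1) - 1 = p := by omega
    rw [this]
    linarith
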